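/- Let 1 ≤ p < ∞, let ρ : [0,1] → ℝ be continuous, and let y ∈ (0,1). Then the functions G_y(ρ) and H_y(ρ) are differentiable on (0,1) and max{‖(G_y(ρ))′‖_p, ‖(H_y(ρ))′‖_p} ≤ (3/y) τ(ρ, y)_p. (Lemma 3.1, second part.) -/

import Mathlib

open MeasureTheory Set Real

/-- Local modulus of continuity of `ρ` at `x` with radius `δ`, relative to `[0,1]`. -/
noncomputable def omegaMod (ρ : ℝ → ℝ) (x δ : ℝ) : ℝ :=
  sSup {d : ℝ | ∃ u ∈ Icc (x - δ) (x + δ) ∩ Icc (0:ℝ) 1,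
    ∃ v ∈ Icc (x - δ) (x + δ) ∩ Icc (0:ℝ) 1, d = |ρ u - ρ v|}

/-- One-sided operator `G_y`. -/
noncomputable def Gop (y : ℝ) (ρ : ℝ → ℝ) (x : ℝ) : ℝ :=
  ∫ t in (0:ℝ)..1, (ρ ((1 - y) * x + y * t) - omegaMod ρ ((1 - y) * x + y * t) y)

/-- One-sided operator `H_y`. -/
noncomputable def Hop (y : ℝ) (ρ : ℝ → ℝ) (x : ℝ) : ℝ :=
  ∫ t in (0:ℝ)..1, (ρ ((1 - y) * x + y * t) + omegaMod ρ ((1 - y) * x + y * t) y)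

/-- `L^p` norm on `[0,1]`. -/
noncomputable def lpNorm (p : ℝ) (f : ℝ → ℝ) : ℝ :=
  (∫ x in (0:ℝ)..1, |f x| ^ p) ^ (1 / p)

/-- Averaged modulus of smoothness `τ(ρ, δ)_p`. -/
noncomputable def tau (p : ℝ) (ρ : ℝ → ℝ) (δ : ℝ) : ℝ :=
  lpNorm p (fun x => omegaMod ρ x δ)

/-- The step function `Φ`. -/
noncomputable def stepPhi (x : ℝ) : ℝ := if 0 < x then 1 else 0

/-- Operator `M_k` built from polynomials `P ≤ Φ ≤ Q`, applied to `f` with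
`f x = f 0 + ∫_0^x g`. -/
noncomputable def Mop (P Q : Polynomial ℝ) (f0 : ℝ) (g : ℝ → ℝ) (x : ℝ) : ℝ :=
  f0 + (∫ t in (0:ℝ)..1, P.eval (x - t) * max (g t) 0)
     - ∫ t in (0:ℝ)..1, Q.eval (x - t) * max (-g t) 0

/-- Operator `N_k` built from polynomials `P ≤ Φ ≤ Q`, applied to `f` with
`f x = f 0 + ∫_0^x g`. -/
noncomputable def Nop (P Q : Polynomial ℝ) (f0 : ℝ) (g : ℝ → ℝ) (x : ℝ) : ℝ :=
  f0 + (∫ t in (0:ℝ)..1, Q.eval (x - t) * max (g t) 0)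
     - ∫ t in (0:ℝ)..1, P.eval (x - t) * max (-g t) 0

/-- Degree of best one-sided approximation by polynomials of degree at most `k`. -/
noncomputable def bestE (p : ℝ) (k : ℕ) (ρ : ℝ → ℝ) : ℝ :=
  sInf {c : ℝ | ∃ P Q : Polynomial ℝ, P.natDegree ≤ k ∧ Q.natDegree ≤ k ∧
    (∀ x ∈ Icc (0:ℝ) 1, P.eval x ≤ ρ x ∧ ρ x ≤ Q.eval x) ∧
    c = lpNorm p (fun x => Q.eval x - P.eval x)}

noncomputable def clampF (s : ℝ) : ℝ := max 0 (min s 1)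

noncomputable def rhoT (ρ : ℝ → ℝ) (s : ℝ) : ℝ := ρ (clampF s)

noncomputable def wT (ρ : ℝ → ℝ) (y x : ℝ) : ℝ :=
  sSup ((fun q : ℝ × ℝ => |rhoT ρ q.1 - rhoT ρ q.2|) ''
    (Icc (x - y) (x + y) ×ˢ Icc (x - y) (x + y)))

lemma clampF_mem (s : ℝ) : clampF s ∈ Icc (0:ℝ) 1 := by
  constructor
  · exact le_max_left _ _
  · simp [clampF, le_refl]

lemma clampF_of_mem {s : ℝ} (hs : s ∈ Icc (0:ℝ) 1) : clampF s = s := by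
  simp [clampF, min_eq_left hs.2, max_eq_right hs.1]

lemma clampF_mono : Monotone clampF := by
  intro a b hab
  exact max_le_max le_rfl (min_le_min hab le_rfl)

lemma clampF_lip (u v : ℝ) : |clampF u - clampF v| ≤ |u - v| := by
  unfold clampF
  rw [max_comm 0 (min u 1), max_comm 0 (min v 1)]
  refine (abs_max_sub_max_le_abs _ _ _).trans ?_
  calc |min u 1 - min v 1| ≤ max |u - v| |1 - 1| := abs_min_sub_min_le_max _ _ _ _
  _ = |u - v| := by simp

section
variable {ρ : ℝ → ℝ}

lemma rhoT_cont (hρ : ContinuousOn ρ (Icc (0:ℝ) 1)) : Continuous (rhoT ρ) := by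
  have hc : Continuous clampF := by unfold clampF; fun_prop
  exact hρ.comp_continuous hc clampF_mem

lemma rhoT_uc (hρ : ContinuousOn ρ (Icc (0:ℝ) 1)) :
    ∀ ε > (0:ℝ), ∃ δ > (0:ℝ), ∀ u v : ℝ, |u - v| < δ → |rhoT ρ u - rhoT ρ v| < ε := by
  intro ε hε
  have huc := (isCompact_Icc (a := (0:ℝ)) (b := 1)).uniformContinuousOn_of_continuous hρ
  rw [Metric.uniformContinuousOn_iff] at huc
  obtain ⟨δ, hδ, h⟩ := huc ε hε
  refine ⟨δ, hδ, fun u v huv => ?_⟩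
  have := h (clampF u) (clampF_mem u) (clampF v) (clampF_mem v)
    (by rw [Real.dist_eq]; exact lt_of_le_of_lt (clampF_lip u v) huv)
  rwa [Real.dist_eq] at this

lemma rhoT_bdd (hρ : ContinuousOn ρ (Icc (0:ℝ) 1)) :
    ∃ C : ℝ, ∀ u v : ℝ, |rhoT ρ u - rhoT ρ v| ≤ C := by
  obtain ⟨C, hC⟩ := (isCompact_Icc (a := (0:ℝ)) (b := 1)).exists_bound_of_continuousOn hρ
  refine ⟨C + C, fun u v => ?_⟩
  calc |rhoT ρ u - rhoT ρ v| ≤ |rhoT ρ u| + |rhoT ρ v| := abs_sub _ _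
  _ ≤ C + C := add_le_add (hC _ (clampF_mem u)) (hC _ (clampF_mem v))

end

section
variable {ρ : ℝ → ℝ} {y : ℝ}

lemma wT_set_nonempty (hy : 0 ≤ y) (x : ℝ) :
    ((fun q : ℝ × ℝ => |rhoT ρ q.1 - rhoT ρ q.2|) ''
      (Icc (x - y) (x + y) ×ˢ Icc (x - y) (x + y))).Nonempty := by
  refine ⟨0, ⟨(x, x), ⟨⟨by linarith, by linarith⟩, ⟨by linarith, by linarith⟩⟩, by simp⟩⟩

lemma wT_set_bdd (hρ : ContinuousOn ρ (Icc (0:ℝ) 1)) (x : ℝ) :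
    BddAbove ((fun q : ℝ × ℝ => |rhoT ρ q.1 - rhoT ρ q.2|) ''
      (Icc (x - y) (x + y) ×ˢ Icc (x - y) (x + y))) := by
  obtain ⟨C, hC⟩ := rhoT_bdd hρ
  exact ⟨C, fun d ⟨q, _, hq⟩ => hq ▸ hC _ _⟩

lemma le_wT (hρ : ContinuousOn ρ (Icc (0:ℝ) 1)) {x u v : ℝ}
    (hu : u ∈ Icc (x - y) (x + y)) (hv : v ∈ Icc (x - y) (x + y)) :
    |rhoT ρ u - rhoT ρ v| ≤ wT ρ y x :=
  le_csSup (wT_set_bdd hρ x) ⟨(u, v), ⟨hu, hv⟩, rfl⟩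

lemma wT_le (hy : 0 ≤ y) {x c : ℝ}
    (h : ∀ u ∈ Icc (x - y) (x + y), ∀ v ∈ Icc (x - y) (x + y),
      |rhoT ρ u - rhoT ρ v| ≤ c) : wT ρ y x ≤ c :=
  csSup_le (wT_set_nonempty hy x) (fun d ⟨q, hq, hd⟩ => hd ▸ h q.1 hq.1 q.2 hq.2)

lemma wT_nonneg (hρ : ContinuousOn ρ (Icc (0:ℝ) 1)) (hy : 0 ≤ y) (x : ℝ) :
    0 ≤ wT ρ y x := by
  have : |rhoT ρ x - rhoT ρ x| ≤ wT ρ y x :=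
    le_wT hρ ⟨by linarith, by linarith⟩ ⟨by linarith, by linarith⟩
  simpa using this

lemma clampF_mem_window {x s : ℝ} (h1 : x - y ≤ 1) (h2 : (0:ℝ) ≤ x + y)
    (hs : s ∈ Icc (x - y) (x + y)) :
    clampF s ∈ Icc (x - y) (x + y) ∩ Icc (0:ℝ) 1 := by
  refine ⟨⟨?_, ?_⟩, clampF_mem s⟩
  · exact le_trans (le_min hs.1 h1) (le_max_right 0 _)
  · exact max_le h2 (le_trans (min_le_left _ _) hs.2)

lemma omega_eq_wT (hρ : ContinuousOn ρ (Icc (0:ℝ) 1)) (hy : 0 ≤ y) (x : ℝ) :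
    omegaMod ρ x y = wT ρ y x := by
  by_cases hc : (0 ≤ x + y ∧ x - y ≤ 1)
  · obtain ⟨h2, h1⟩ := hc
    have hset : {d : ℝ | ∃ u ∈ Icc (x - y) (x + y) ∩ Icc (0:ℝ) 1,
        ∃ v ∈ Icc (x - y) (x + y) ∩ Icc (0:ℝ) 1, d = |ρ u - ρ v|} =
        (fun q : ℝ × ℝ => |rhoT ρ q.1 - rhoT ρ q.2|) ''
          (Icc (x - y) (x + y) ×ˢ Icc (x - y) (x + y)) := by
      ext d
      constructor
      · rintro ⟨u, ⟨hu1, hu2⟩, v, ⟨hv1, hv2⟩, rfl⟩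
        refine ⟨(u, v), ⟨hu1, hv1⟩, ?_⟩
        simp [rhoT, clampF_of_mem hu2, clampF_of_mem hv2]
      · rintro ⟨⟨u, v⟩, ⟨hu, hv⟩, rfl⟩
        obtain ⟨hu1, hu2⟩ := clampF_mem_window h1 h2 hu
        obtain ⟨hv1, hv2⟩ := clampF_mem_window h1 h2 hv
        exact ⟨clampF u, ⟨hu1, hu2⟩, clampF v, ⟨hv1, hv2⟩, rfl⟩
    rw [omegaMod, hset, wT]
  · -- degenerate case: the window misses [0,1]
    push_neg at hc
    have hcase : x + y < 0 ∨ 1 < x - y := by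
      by_cases h2 : 0 ≤ x + y
      · exact Or.inr (lt_of_not_ge fun h1 => by linarith [hc h2])
      · exact Or.inl (lt_of_not_ge h2)
    have hun : {d : ℝ | ∃ u ∈ Icc (x - y) (x + y) ∩ Icc (0:ℝ) 1,
        ∃ v ∈ Icc (x - y) (x + y) ∩ Icc (0:ℝ) 1, d = |ρ u - ρ v|} = ∅ := by
      ext d
      simp only [mem_setOf_eq, mem_empty_iff_false, iff_false, not_exists]
      rintro u ⟨⟨hu1, hu2⟩, ⟨hu3, hu4⟩⟩
      rcases hcase with h | h <;> simp_all <;> linarith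
    have hconst : ∃ c : ℝ, ∀ t ∈ Icc (x - y) (x + y), clampF t = c := by
      rcases hcase with h | h
      · refine ⟨0, fun t ht => ?_⟩
        simp only [clampF, max_eq_left_iff]
        exact le_trans (min_le_left _ _) (by linarith [ht.2])
      · refine ⟨1, fun t ht => ?_⟩
        simp only [clampF]
        rw [min_eq_right (by linarith [ht.1]), max_eq_right zero_le_one]
    have hwt : wT ρ y x = 0 := by
      refine le_antisymm (wT_le hy ?_) (wT_nonneg hρ hy x)
      intro u hu v hv
      obtain ⟨c, hall⟩ := hconst
      rw [rhoT, rhoT, hall u hu, hall v hv]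
      simp
    rw [omegaMod, hun, hwt, Real.sSup_empty]

end

section
variable {ρ : ℝ → ℝ} {y : ℝ}

lemma wT_shift (hρ : ContinuousOn ρ (Icc (0:ℝ) 1)) (hy : 0 ≤ y)
    {ε δ : ℝ} (hε : 0 < ε)
    (hδ : ∀ u v : ℝ, |u - v| < δ → |rhoT ρ u - rhoT ρ v| < ε)
    {x1 x2 : ℝ} (h12 : |x1 - x2| < δ) :
    wT ρ y x1 ≤ wT ρ y x2 + (ε + ε) := by
  refine wT_le hy (fun u hu v hv => ?_)
  have hu' : u - x1 + x2 ∈ Icc (x2 - y) (x2 + y) := by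
    constructor <;> [linarith [hu.1]; linarith [hu.2]]
  have hv' : v - x1 + x2 ∈ Icc (x2 - y) (x2 + y) := by
    constructor <;> [linarith [hv.1]; linarith [hv.2]]
  have h1 : |rhoT ρ u - rhoT ρ (u - x1 + x2)| < ε := by
    apply hδ; rw [show u - (u - x1 + x2) = x1 - x2 by ring]; exact h12
  have h2 : |rhoT ρ v - rhoT ρ (v - x1 + x2)| < ε := by
    apply hδ; rw [show v - (v - x1 + x2) = x1 - x2 by ring]; exact h12
  have h3 : |rhoT ρ (u - x1 + x2) - rhoT ρ (v - x1 + x2)| ≤ wT ρ y x2 :=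
    le_wT hρ hu' hv'
  have := abs_sub_abs_le_abs_sub (rhoT ρ u - rhoT ρ v)
    (rhoT ρ (u - x1 + x2) - rhoT ρ (v - x1 + x2))
  have habs : |rhoT ρ u - rhoT ρ v - (rhoT ρ (u - x1 + x2) - rhoT ρ (v - x1 + x2))| ≤
      |rhoT ρ u - rhoT ρ (u - x1 + x2)| + |rhoT ρ v - rhoT ρ (v - x1 + x2)| := by
    rw [show rhoT ρ u - rhoT ρ v - (rhoT ρ (u - x1 + x2) - rhoT ρ (v - x1 + x2)) =
      (rhoT ρ u - rhoT ρ (u - x1 + x2)) - (rhoT ρ v - rhoT ρ (v - x1 + x2)) by ring]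
    exact abs_sub _ _
  linarith

lemma wT_cont (hρ : ContinuousOn ρ (Icc (0:ℝ) 1)) (hy : 0 ≤ y) :
    Continuous (wT ρ y) := by
  rw [Metric.continuous_iff]
  intro x ε hε
  obtain ⟨δ, hδ0, hδ⟩ := rhoT_uc hρ (ε / 4) (by linarith)
  refine ⟨δ, hδ0, fun x' hx' => ?_⟩
  rw [Real.dist_eq] at hx' ⊢
  have h1 := wT_shift hρ hy (by linarith : (0:ℝ) < ε / 4) hδ hx'
  have h2 := wT_shift hρ hy (by linarith : (0:ℝ) < ε / 4) hδ
    (by rw [abs_sub_comm]; exact hx' : |x - x'| < δ)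
  rw [abs_lt]; constructor <;> linarith

end

lemma op_deriv {F : ℝ → ℝ} (hF : Continuous F) {y : ℝ} (hy : y ∈ Ioo (0:ℝ) 1)
    (f : ℝ → ℝ)
    (hf : ∀ x' ∈ Ioo (0:ℝ) 1, f x' = ∫ t in (0:ℝ)..1, F (y * t + (1 - y) * x'))
    {x : ℝ} (hx : x ∈ Ioo (0:ℝ) 1) :
    HasDerivAt f (y⁻¹ * (1 - y) * (F ((1 - y) * x + y) - F ((1 - y) * x))) x := by
  obtain ⟨hy0, hy1⟩ := hy
  set g : ℝ → ℝ := fun x' => y⁻¹ * ((∫ u in (0:ℝ)..((1 - y) * x' + y), F u)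
    - ∫ u in (0:ℝ)..((1 - y) * x'), F u) with hg
  have hfg : ∀ x' ∈ Ioo (0:ℝ) 1, f x' = g x' := by
    intro x' hx'
    rw [hf x' hx', intervalIntegral.integral_comp_mul_add F (ne_of_gt hy0) ((1 - y) * x')]
    rw [smul_eq_mul, hg]
    simp only [mul_zero, zero_add, mul_one]
    congr 1
    rw [← intervalIntegral.integral_interval_sub_left
      (hF.intervalIntegrable 0 (y + (1 - y) * x')) (hF.intervalIntegrable 0 ((1 - y) * x'))]
    ring_nf
  have hinner : ∀ d : ℝ, HasDerivAt (fun x' : ℝ => (1 - y) * x' + d) (1 - y) x := by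
    intro d
    simpa using ((hasDerivAt_id x).const_mul (1 - y)).add_const d
  have h1 : HasDerivAt (fun x' => ∫ u in (0:ℝ)..((1 - y) * x' + y), F u)
      (F ((1 - y) * x + y) * (1 - y)) x :=
    by have := HasDerivAt.comp x ((hF.integral_hasStrictDerivAt 0 ((1 - y) * x + y)).hasDerivAt) (hinner y); exact this
  have h0 : HasDerivAt (fun x' => ∫ u in (0:ℝ)..((1 - y) * x'), F u)
      (F ((1 - y) * x) * (1 - y)) x := by
    have := HasDerivAt.comp x ((hF.integral_hasStrictDerivAt 0 ((1 - y) * x + 0)).hasDerivAt)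
      (hinner 0)
    simp only [add_zero] at this; exact this
  have hgd : HasDerivAt g (y⁻¹ * (F ((1 - y) * x + y) * (1 - y) - F ((1 - y) * x) * (1 - y))) x :=
    (h1.sub h0).const_mul _
  have hev : f =ᶠ[nhds x] g :=
    Filter.eventuallyEq_of_mem (isOpen_Ioo.mem_nhds hx) hfg
  have := hgd.congr_of_eventuallyEq hev
  convert this using 1
  · rfl
  · rfl
  ring

lemma ip_nonneg (p : ℝ) (f : ℝ → ℝ) : 0 ≤ ∫ x in (0:ℝ)..1, |f x| ^ p :=
  intervalIntegral.integral_nonneg zero_le_one (fun x _ => Real.rpow_nonneg (abs_nonneg _) p)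

lemma lpNorm_nonneg (p : ℝ) (f : ℝ → ℝ) : 0 ≤ lpNorm p f :=
  Real.rpow_nonneg (ip_nonneg p f) _

lemma lpNorm_le_lpNorm {p : ℝ} (hp : 1 ≤ p) {f h : ℝ → ℝ}
    (hfm : Measurable f) (hh : Continuous h) (hh0 : ∀ x, 0 ≤ h x)
    (hb : ∀ x ∈ Ioo (0:ℝ) 1, |f x| ≤ h x) : lpNorm p f ≤ lpNorm p h := by
  have hp0 : (0:ℝ) < p := lt_of_lt_of_le one_pos hp
  have hrestr : volume.restrict (Ioc (0:ℝ) 1) = volume.restrict (Ioo (0:ℝ) 1) :=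
    (Measure.restrict_congr_set Ioo_ae_eq_Ioc).symm
  have hmem : ∀ᵐ x ∂(volume.restrict (Ioc (0:ℝ) 1)), x ∈ Ioo (0:ℝ) 1 := by
    rw [hrestr]; exact ae_restrict_mem measurableSet_Ioo
  have hae : ∀ᵐ x ∂(volume.restrict (Ioc (0:ℝ) 1)), |f x| ^ p ≤ |h x| ^ p := by
    filter_upwards [hmem] with x hx
    exact Real.rpow_le_rpow (abs_nonneg _) (le_trans (hb x hx) (le_abs_self _)) hp0.le
  have hcont : Continuous (fun x => |h x| ^ p) :=
    hh.abs.rpow_const (fun x => Or.inr hp0.le)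
  have hih : IntegrableOn (fun x => |h x| ^ p) (Ioc (0:ℝ) 1) :=
    hcont.integrableOn_Ioc
  have hmf : AEStronglyMeasurable (fun x => |f x| ^ p)
      (volume.restrict (Ioc (0:ℝ) 1)) :=
    ((hfm.abs.pow_const p).aestronglyMeasurable)
  have hif : IntegrableOn (fun x => |f x| ^ p) (Ioc (0:ℝ) 1) := by
    refine Integrable.mono hih hmf ?_
    filter_upwards [hae] with x hx
    rw [Real.norm_eq_abs, Real.norm_eq_abs, abs_of_nonneg (Real.rpow_nonneg (abs_nonneg _) p),
      abs_of_nonneg (Real.rpow_nonneg (abs_nonneg _) p)]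
    exact hx
  have : (∫ x in (0:ℝ)..1, |f x| ^ p) ≤ ∫ x in (0:ℝ)..1, |h x| ^ p := by
    rw [intervalIntegral.integral_of_le zero_le_one, intervalIntegral.integral_of_le zero_le_one]
    exact integral_mono_ae hif hih hae
  exact Real.rpow_le_rpow (ip_nonneg p f) this (by positivity)

lemma lpNorm_const_mul {p : ℝ} (hp : 1 ≤ p) {c : ℝ} (hc : 0 ≤ c) (f : ℝ → ℝ) :
    lpNorm p (fun x => c * f x) = c * lpNorm p f := by
  have hp0 : (0:ℝ) < p := lt_of_lt_of_le one_pos hp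
  unfold _root_.lpNorm
  have h1 : ∀ x : ℝ, |c * f x| ^ p = c ^ p * |f x| ^ p := by
    intro x
    rw [abs_mul, abs_of_nonneg hc, Real.mul_rpow hc (abs_nonneg _)]
  simp only [h1]
  rw [intervalIntegral.integral_const_mul,
    Real.mul_rpow (by positivity) (ip_nonneg p f),
    ← Real.rpow_mul hc, mul_one_div_cancel (ne_of_gt hp0), Real.rpow_one]

lemma lpNorm_comp_scale {p : ℝ} (hp : 1 ≤ p) {w : ℝ → ℝ} (hw : Continuous w)
    {c d : ℝ} (hc : 0 < c) (hd : 0 ≤ d) (hcd : c + d ≤ 1) :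
    lpNorm p (fun x => w (c * x + d)) ≤ c⁻¹ ^ (1 / p) * lpNorm p w := by
  have hp0 : (0:ℝ) < p := lt_of_lt_of_le one_pos hp
  have hcont : Continuous (fun u => |w u| ^ p) := hw.abs.rpow_const (fun x => Or.inr hp0.le)
  have h1 : (∫ x in (0:ℝ)..1, |w (c * x + d)| ^ p)
      = c⁻¹ * ∫ u in d..(c + d), |w u| ^ p := by
    have := intervalIntegral.integral_comp_mul_add (a := (0:ℝ)) (b := 1)
      (fun u => |w u| ^ p) (ne_of_gt hc) d
    rw [this, smul_eq_mul]
    norm_num [add_comm]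
  have h2 : (∫ u in d..(c + d), |w u| ^ p) ≤ ∫ u in (0:ℝ)..1, |w u| ^ p := by
    refine intervalIntegral.integral_mono_interval hd (by linarith) hcd ?_
      (hcont.intervalIntegrable 0 1)
    filter_upwards with u
    exact Real.rpow_nonneg (abs_nonneg _) p
  have h3 : (∫ x in (0:ℝ)..1, |w (c * x + d)| ^ p)
      ≤ c⁻¹ * ∫ u in (0:ℝ)..1, |w u| ^ p := by
    rw [h1]
    exact mul_le_mul_of_nonneg_left h2 (by positivity)
  unfold _root_.lpNorm
  calc (∫ x in (0:ℝ)..1, |w (c * x + d)| ^ p) ^ (1 / p)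
      ≤ (c⁻¹ * ∫ u in (0:ℝ)..1, |w u| ^ p) ^ (1 / p) :=
        Real.rpow_le_rpow (ip_nonneg p _) h3 (by positivity)
  _ = c⁻¹ ^ (1 / p) * (∫ u in (0:ℝ)..1, |w u| ^ p) ^ (1 / p) :=
        Real.mul_rpow (by positivity) (ip_nonneg p w)

lemma lp_toReal {p : ℝ} (hp : 1 ≤ p) {g : ℝ → ℝ} (hg : Continuous g) (hg0 : ∀ x, 0 ≤ g x) :
    (∫ x in (0:ℝ)..1, |g x| ^ p)
      = (∫⁻ x in Ioc (0:ℝ) 1, (ENNReal.ofReal (g x)) ^ p).toReal := by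
  have hp0 : (0:ℝ) < p := lt_of_lt_of_le one_pos hp
  rw [intervalIntegral.integral_of_le zero_le_one]
  rw [MeasureTheory.integral_eq_lintegral_of_nonneg_ae
    (Filter.Eventually.of_forall (fun x => Real.rpow_nonneg (abs_nonneg _) p))
    ((hg.abs.rpow_const (fun x => Or.inr hp0.le)).aestronglyMeasurable)]
  congr 1
  apply lintegral_congr
  intro x
  rw [abs_of_nonneg (hg0 x), ← ENNReal.ofReal_rpow_of_nonneg (hg0 x) hp0.le]

lemma lintegral_rpow_lt_top {p : ℝ} (hp : 1 ≤ p) {g : ℝ → ℝ} (hg : Continuous g)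
    (hg0 : ∀ x, 0 ≤ g x) :
    (∫⁻ x in Ioc (0:ℝ) 1, (ENNReal.ofReal (g x)) ^ p) < ⊤ := by
  have hp0 : (0:ℝ) < p := lt_of_lt_of_le one_pos hp
  obtain ⟨C, hC⟩ := (isCompact_Icc (a := (0:ℝ)) (b := 1)).exists_bound_of_continuousOn
    hg.continuousOn
  have hb : ∀ᵐ x ∂(volume.restrict (Ioc (0:ℝ) 1)),
      (ENNReal.ofReal (g x)) ^ p ≤ ENNReal.ofReal (C ^ p) := by
    filter_upwards [ae_restrict_mem measurableSet_Ioc] with x hx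
    have hgx : g x ≤ C := by
      have := hC x (Ioc_subset_Icc_self hx)
      rw [Real.norm_eq_abs, abs_of_nonneg (hg0 x)] at this
      exact this
    calc (ENNReal.ofReal (g x)) ^ p = ENNReal.ofReal (g x ^ p) := by
          rw [ENNReal.ofReal_rpow_of_nonneg (hg0 x) hp0.le]
    _ ≤ ENNReal.ofReal (C ^ p) :=
          ENNReal.ofReal_le_ofReal (Real.rpow_le_rpow (hg0 x) hgx hp0.le)
  calc (∫⁻ x in Ioc (0:ℝ) 1, (ENNReal.ofReal (g x)) ^ p)
      ≤ ∫⁻ _ in Ioc (0:ℝ) 1, ENNReal.ofReal (C ^ p) := lintegral_mono_ae hb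
  _ = ENNReal.ofReal (C ^ p) * volume (Ioc (0:ℝ) 1) := by rw [lintegral_const]; simp
  _ < ⊤ := by
      rw [Real.volume_Ioc]
      exact ENNReal.mul_lt_top ENNReal.ofReal_lt_top ENNReal.ofReal_lt_top

lemma lpNorm_add_le {p : ℝ} (hp : 1 ≤ p) {g1 g2 : ℝ → ℝ}
    (h1 : Continuous g1) (h2 : Continuous g2)
    (n1 : ∀ x, 0 ≤ g1 x) (n2 : ∀ x, 0 ≤ g2 x) :
    lpNorm p (fun x => g1 x + g2 x) ≤ lpNorm p g1 + lpNorm p g2 := by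
  have hp0 : (0:ℝ) < p := lt_of_lt_of_le one_pos hp
  set μ := volume.restrict (Ioc (0:ℝ) 1)
  set F : ℝ → ENNReal := fun x => ENNReal.ofReal (g1 x)
  set G : ℝ → ENNReal := fun x => ENNReal.ofReal (g2 x)
  have hFm : AEMeasurable F μ := (ENNReal.measurable_ofReal.comp h1.measurable).aemeasurable
  have hGm : AEMeasurable G μ := (ENNReal.measurable_ofReal.comp h2.measurable).aemeasurable
  have mink := ENNReal.lintegral_Lp_add_le hFm hGm hp
  have hsum : (∫⁻ x, ((F + G) x) ^ p ∂μ)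
      = ∫⁻ x in Ioc (0:ℝ) 1, (ENNReal.ofReal (g1 x + g2 x)) ^ p := by
    apply lintegral_congr
    intro x
    rw [ENNReal.ofReal_add (n1 x) (n2 x)]
    rfl
  rw [hsum] at mink
  have key : ∀ (g : ℝ → ℝ), Continuous g → (∀ x, 0 ≤ g x) →
      lpNorm p g = ((∫⁻ x in Ioc (0:ℝ) 1, (ENNReal.ofReal (g x)) ^ p) ^ (1 / p)).toReal := by
    intro g hg hg0
    rw [_root_.lpNorm, lp_toReal hp hg hg0, ENNReal.toReal_rpow]
  have hfin : ∀ (g : ℝ → ℝ), Continuous g → (∀ x, 0 ≤ g x) →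
      (∫⁻ x in Ioc (0:ℝ) 1, (ENNReal.ofReal (g x)) ^ p) ^ (1 / p) ≠ ⊤ := by
    intro g hg hg0
    exact (ENNReal.rpow_lt_top_of_nonneg (by positivity)
      (lintegral_rpow_lt_top hp hg hg0).ne).ne
  rw [key (fun x => g1 x + g2 x) (h1.add h2) (fun x => add_nonneg (n1 x) (n2 x)), key _ h1 n1, key _ h2 n2]
  rw [← ENNReal.toReal_add (hfin _ h1 n1) (hfin _ h2 n2)]
  exact ENNReal.toReal_mono
    (ENNReal.add_ne_top.2 ⟨hfin _ h1 n1, hfin _ h2 n2⟩) mink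

theorem stmt1 (p : ℝ) (hp : 1 ≤ p) (ρ : ℝ → ℝ)
    (hρ : ContinuousOn ρ (Icc (0:ℝ) 1)) (y : ℝ) (hy : y ∈ Ioo (0:ℝ) 1) :
    (∀ x ∈ Ioo (0:ℝ) 1, DifferentiableAt ℝ (Gop y ρ) x) ∧
    (∀ x ∈ Ioo (0:ℝ) 1, DifferentiableAt ℝ (Hop y ρ) x) ∧
    max (lpNorm p (deriv (Gop y ρ))) (lpNorm p (deriv (Hop y ρ))) ≤
      (3 / y) * tau p ρ y := by
  obtain ⟨hy0, hy1⟩ := hy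
  have hyy : y ∈ Ioo (0:ℝ) 1 := ⟨hy0, hy1⟩
  set w : ℝ → ℝ := wT ρ y with hw
  have hwc : Continuous w := wT_cont hρ hy0.le
  have hwn : ∀ s, 0 ≤ w s := wT_nonneg hρ hy0.le
  have hrc : Continuous (rhoT ρ) := rhoT_cont hρ
  have hτ : tau p ρ y = lpNorm p w := by
    rw [tau]
    congr 1
    funext x
    exact omega_eq_wT hρ hy0.le x
  have hτn : 0 ≤ tau p ρ y := by rw [hτ]; exact lpNorm_nonneg p w
  -- the common core for both operators
  have main : ∀ ε : ℝ, |ε| ≤ 1 → ∀ f : ℝ → ℝ,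
      (∀ x' ∈ Ioo (0:ℝ) 1, f x' =
        ∫ t in (0:ℝ)..1, (rhoT ρ (y * t + (1 - y) * x') + ε * w (y * t + (1 - y) * x'))) →
      (∀ x ∈ Ioo (0:ℝ) 1, DifferentiableAt ℝ f x) ∧
        lpNorm p (deriv f) ≤ (3 / y) * tau p ρ y := by
    intro ε hε f hfeq
    set F : ℝ → ℝ := fun s => rhoT ρ s + ε * w s with hF
    have hFc : Continuous F := hrc.add (continuous_const.mul hwc)
    have hder : ∀ x ∈ Ioo (0:ℝ) 1, HasDerivAt f
        (y⁻¹ * (1 - y) * (F ((1 - y) * x + y) - F ((1 - y) * x))) x := by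
      intro x hx
      exact op_deriv hFc hyy f (fun x' hx' => hfeq x' hx') hx
    refine ⟨fun x hx => (hder x hx).differentiableAt, ?_⟩
    -- pointwise bound on the derivative
    set c : ℝ := y⁻¹ * (1 - y) with hc
    have hc0 : 0 ≤ c := by
      have h1y : (0:ℝ) < 1 - y := by linarith
      positivity
    have hbd : ∀ x ∈ Ioo (0:ℝ) 1, |deriv f x| ≤
        c * 2 * w ((1 - y) * x) + c * w ((1 - y) * x + y) := by
      intro x hx
      rw [(hder x hx).deriv]
      set a := (1 - y) * x with ha
      have hr : |rhoT ρ (a + y) - rhoT ρ a| ≤ w a :=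
        le_wT hρ ⟨by linarith, le_rfl⟩ ⟨by linarith, by linarith⟩
      have hwd : |w (a + y) - w a| ≤ w a + w (a + y) := by
        calc |w (a + y) - w a| ≤ |w (a + y)| + |w a| := abs_sub _ _
        _ = w (a + y) + w a := by
            rw [abs_of_nonneg (hwn _), abs_of_nonneg (hwn _)]
        _ = w a + w (a + y) := by ring
      have hsplit : |F (a + y) - F a| ≤ |rhoT ρ (a + y) - rhoT ρ a| + |w (a + y) - w a| := by
        calc |F (a + y) - F a|
            = |(rhoT ρ (a + y) - rhoT ρ a) + ε * (w (a + y) - w a)| := by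
              rw [hF]; ring_nf
        _ ≤ |rhoT ρ (a + y) - rhoT ρ a| + |ε * (w (a + y) - w a)| := abs_add_le _ _
        _ ≤ |rhoT ρ (a + y) - rhoT ρ a| + |w (a + y) - w a| := by
              rw [abs_mul]
              have := abs_nonneg (w (a + y) - w a)
              nlinarith
      rw [abs_mul, abs_of_nonneg hc0]
      have : |F (a + y) - F a| ≤ 2 * w a + w (a + y) := by linarith
      calc c * |F ((1 - y) * x + y) - F ((1 - y) * x)| = c * |F (a + y) - F a| := by rw [ha]
      _ ≤ c * (2 * w a + w (a + y)) := mul_le_mul_of_nonneg_left this hc0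
      _ = c * 2 * w ((1 - y) * x) + c * w ((1 - y) * x + y) := by rw [ha]; ring
    -- Lp estimate
    have hg1c : Continuous (fun x => c * 2 * w ((1 - y) * x)) := by fun_prop
    have hg2c : Continuous (fun x => c * w ((1 - y) * x + y)) := by fun_prop
    have h1 : lpNorm p (deriv f) ≤
        lpNorm p (fun x => c * 2 * w ((1 - y) * x) + c * w ((1 - y) * x + y)) := by
      refine lpNorm_le_lpNorm hp (measurable_deriv f) (hg1c.add hg2c) ?_ hbd
      intro x
      have := hwn ((1 - y) * x)
      have := hwn ((1 - y) * x + y)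
      positivity
    have h2 : lpNorm p (fun x => c * 2 * w ((1 - y) * x) + c * w ((1 - y) * x + y)) ≤
        lpNorm p (fun x => c * 2 * w ((1 - y) * x)) + lpNorm p (fun x => c * w ((1 - y) * x + y)) := by
      refine lpNorm_add_le hp hg1c hg2c ?_ ?_ <;> intro x
      · have := hwn ((1 - y) * x); positivity
      · have := hwn ((1 - y) * x + y); positivity
    have h3 : lpNorm p (fun x => c * 2 * w ((1 - y) * x)) =
        c * 2 * lpNorm p (fun x => w ((1 - y) * x)) :=
      lpNorm_const_mul hp (by positivity) _
    have h4 : lpNorm p (fun x => c * w ((1 - y) * x + y)) =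
        c * lpNorm p (fun x => w ((1 - y) * x + y)) :=
      lpNorm_const_mul hp hc0 _
    set K : ℝ := (1 - y)⁻¹ ^ (1 / p) with hK
    have hK0 : 0 ≤ K := by
      have h1y : (0:ℝ) < 1 - y := by linarith
      positivity
    have h5 : lpNorm p (fun x => w ((1 - y) * x)) ≤ K * lpNorm p w := by
      have h := lpNorm_comp_scale hp hwc (c := 1 - y) (d := 0) (by linarith) le_rfl (by linarith)
      rw [hK, one_div]
      simpa using h
    have h6 : lpNorm p (fun x => w ((1 - y) * x + y)) ≤ K * lpNorm p w := by
      exact lpNorm_comp_scale hp hwc (by linarith) hy0.le (by linarith)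
    -- the key numeric inequality : c * K ≤ y⁻¹
    have hcK : c * K ≤ y⁻¹ := by
      have hs0 : (0:ℝ) < 1 - y := by linarith
      have hs1 : (1:ℝ) - y ≤ 1 := by linarith
      have hinv : ((1 - y)⁻¹ : ℝ) ^ (1 / p) = ((1 - y) ^ (1 / p))⁻¹ :=
        Real.inv_rpow hs0.le _
      have hle : (1 - y) ≤ (1 - y) ^ (1 / p) := by
        have := Real.rpow_le_rpow_of_exponent_ge hs0 hs1
          (by rw [div_le_one (lt_of_lt_of_le one_pos hp)]; exact hp : 1 / p ≤ 1)
        simpa using this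
      have hpos : (0:ℝ) < (1 - y) ^ (1 / p) := Real.rpow_pos_of_pos hs0 _
      have : (1 - y) * ((1 - y) ^ (1 / p))⁻¹ ≤ 1 := by
        rw [mul_inv_le_iff₀ hpos, one_mul]; exact hle
      calc c * K = y⁻¹ * ((1 - y) * ((1 - y) ^ (1 / p))⁻¹) := by
            rw [hc, hK, hinv]; ring
      _ ≤ y⁻¹ * 1 := by
            apply mul_le_mul_of_nonneg_left this (by positivity)
      _ = y⁻¹ := mul_one _
    have hwno : 0 ≤ lpNorm p w := lpNorm_nonneg p w
    calc lpNorm p (deriv f)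
        ≤ c * 2 * (K * lpNorm p w) + c * (K * lpNorm p w) := by
          have e3 := mul_le_mul_of_nonneg_left h5 (by positivity : (0:ℝ) ≤ c * 2)
          have e4 := mul_le_mul_of_nonneg_left h6 hc0
          linarith [h1, h2, h3 ▸ e3, h4 ▸ e4]
    _ = 3 * (c * K) * lpNorm p w := by ring
    _ ≤ 3 * y⁻¹ * lpNorm p w := by nlinarith
    _ = (3 / y) * tau p ρ y := by rw [hτ]; ring
  -- specialize to G and H
  have hGre : ∀ x' ∈ Ioo (0:ℝ) 1, Gop y ρ x' =
      ∫ t in (0:ℝ)..1, (rhoT ρ (y * t + (1 - y) * x') + (-1) * w (y * t + (1 - y) * x')) := by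
    intro x' hx'
    rw [Gop]
    apply intervalIntegral.integral_congr
    intro t ht
    rw [uIcc_of_le zero_le_one] at ht
    have hs : (1 - y) * x' + y * t ∈ Icc (0:ℝ) 1 := by
      constructor <;> nlinarith [ht.1, ht.2, hx'.1, hx'.2]
    have heq : y * t + (1 - y) * x' = (1 - y) * x' + y * t := by ring
    beta_reduce
    rw [heq, rhoT, clampF_of_mem hs, omega_eq_wT hρ hy0.le]
    ring
  have hHre : ∀ x' ∈ Ioo (0:ℝ) 1, Hop y ρ x' =
      ∫ t in (0:ℝ)..1, (rhoT ρ (y * t + (1 - y) * x') + 1 * w (y * t + (1 - y) * x')) := by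
    intro x' hx'
    rw [Hop]
    apply intervalIntegral.integral_congr
    intro t ht
    rw [uIcc_of_le zero_le_one] at ht
    have hs : (1 - y) * x' + y * t ∈ Icc (0:ℝ) 1 := by
      constructor <;> nlinarith [ht.1, ht.2, hx'.1, hx'.2]
    have heq : y * t + (1 - y) * x' = (1 - y) * x' + y * t := by ring
    beta_reduce
    rw [heq, rhoT, clampF_of_mem hs, omega_eq_wT hρ hy0.le]
    ring
  obtain ⟨hGdiff, hGlp⟩ := main (-1) (by norm_num) (Gop y ρ) hGre
  obtain ⟨hHdiff, hHlp⟩ := main 1 (by norm_num) (Hop y ρ) hHre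
  exact ⟨hGdiff, hHdiff, max_le hGlp hHlp⟩
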